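/- Let (Δ) range over a finite family of events indexed by cells, where cell Δ 'appears' for sample R iff the colors in a fixed set D_Δ are all included in R and none of the colors in a fixed set L_Δ are included, with colors included independently with probability p. If at most one cell containing q can appear for R' with p = 1/4, i.e. ∑_{Δ∋q} (1/4)^{|D_Δ|}(3/4)^{|L_Δ|} ≤ 1, and each |D_Δ| ≤ d for a constant d, then for the sample R with p = 1/2 we have E[|L_{Δ(q)}|] = ∑_{Δ∋q} |L_Δ| (1/2)^{|D_Δ|}(1/2)^{|L_Δ|} = O(1). -/
import Mathlib


/-- Clarkson–Shor style comparison (Lemma 3.1).  Cells `Δ` (ranging over a finite index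
type) containing the query point have defining-color counts `D Δ ≤ d` and conflict-color
counts `L Δ`.  If `∑_Δ (1/4)^{D Δ} (3/4)^{L Δ} ≤ 1` (at most one cell containing `q`
appears for a sample with probability 1/4), then the expected conflict-list size for the
sample with probability 1/2 satisfies
`∑_Δ L Δ · (1/2)^{D Δ} (1/2)^{L Δ} ≤ 8 · 2^d = O(1)`. -/
theorem clarkson_shor_expected_conflict {ι : Type*} [Fintype ι]
    (D L : ι → ℕ) (d : ℕ) (hD : ∀ Δ, D Δ ≤ d)
    (h14 : (∑ Δ, ((1 : ℝ) / 4) ^ D Δ * ((3 : ℝ) / 4) ^ L Δ) ≤ 1) :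
    (∑ Δ, (L Δ : ℝ) * ((1 : ℝ) / 2) ^ D Δ * ((1 : ℝ) / 2) ^ L Δ)
      ≤ 8 * 2 ^ d := by
  have key : ∀ Δ, (L Δ : ℝ) * ((1 : ℝ) / 2) ^ D Δ * ((1 : ℝ) / 2) ^ L Δ
      ≤ 8 * 2 ^ d * (((1 : ℝ) / 4) ^ D Δ * ((3 : ℝ) / 4) ^ L Δ) := by
    intro Δ
    have hL : (L Δ : ℝ) * ((1 : ℝ) / 2) ^ L Δ ≤ 8 * ((3 : ℝ) / 4) ^ L Δ := by
      have hb : (1 : ℝ) + (L Δ : ℝ) * (1 / 2) ≤ ((3 : ℝ) / 2) ^ L Δ := by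
        have := one_add_mul_le_pow (a := (1 : ℝ) / 2) (by norm_num) (L Δ)
        linarith [this]
      have h32 : ((3 : ℝ) / 2) ^ L Δ * ((1 : ℝ) / 2) ^ L Δ = ((3 : ℝ) / 4) ^ L Δ := by
        rw [← mul_pow]; norm_num
      have hpos : (0 : ℝ) < ((1 : ℝ) / 2) ^ L Δ := by positivity
      nlinarith [hpos, mul_le_mul_of_nonneg_right hb hpos.le]
    have hD2 : ((1 : ℝ) / 2) ^ D Δ ≤ 2 ^ d * ((1 : ℝ) / 4) ^ D Δ := by
      have h : ((1 : ℝ) / 2) ^ D Δ = 2 ^ D Δ * ((1 : ℝ) / 4) ^ D Δ := by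
        rw [← mul_pow]; norm_num
      rw [h]
      have : (2 : ℝ) ^ D Δ ≤ 2 ^ d := by
        exact pow_le_pow_right₀ (by norm_num) (hD Δ)
      exact mul_le_mul_of_nonneg_right this (by positivity)
    calc (L Δ : ℝ) * ((1 : ℝ) / 2) ^ D Δ * ((1 : ℝ) / 2) ^ L Δ
        = ((L Δ : ℝ) * ((1 : ℝ) / 2) ^ L Δ) * ((1 : ℝ) / 2) ^ D Δ := by ring
      _ ≤ (8 * ((3 : ℝ) / 4) ^ L Δ) * (2 ^ d * ((1 : ℝ) / 4) ^ D Δ) := by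
          apply mul_le_mul hL hD2 (by positivity) (by positivity)
      _ = 8 * 2 ^ d * (((1 : ℝ) / 4) ^ D Δ * ((3 : ℝ) / 4) ^ L Δ) := by ring
  calc (∑ Δ, (L Δ : ℝ) * ((1 : ℝ) / 2) ^ D Δ * ((1 : ℝ) / 2) ^ L Δ)
      ≤ ∑ Δ, 8 * 2 ^ d * (((1 : ℝ) / 4) ^ D Δ * ((3 : ℝ) / 4) ^ L Δ) :=
        Finset.sum_le_sum fun Δ _ => key Δ
    _ = 8 * 2 ^ d * ∑ Δ, ((1 : ℝ) / 4) ^ D Δ * ((3 : ℝ) / 4) ^ L Δ := by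
        rw [← Finset.mul_sum]
    _ ≤ 8 * 2 ^ d * 1 := by
        apply mul_le_mul_of_nonneg_left h14 (by positivity)
    _ = 8 * 2 ^ d := by ring
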